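/- Let F(z_1,...,z_n) = ∏_{i=1}^n (1-z_i)^{-1}, expanded as an infinite series of monomials in z_1,...,z_n. Suppose 0 < r ≤ r_0 < 1 and there is a positive integer m ≤ n such that |z_i| ≤ r for i ≤ m and |z_i| < r^2 for i > m. If f(z_1,...,z_n) is any subseries of the series for F containing the terms 1 + ∑_{i=1}^m z_i, then |F(z_1,...,z_n) − f(z_1,...,z_n)| ≤ [n(n+1)/(2(1−r_0)^{n+2}) + n]·r^2. -/

import Mathlib

open Finset
set_option maxHeartbeats 1000000

lemma geom_pi {K : Type*} [NormedField K] [CompleteSpace K] :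
    ∀ (n : ℕ) (z : Fin n → K), (∀ i, ‖z i‖ < 1) →
      Summable (fun a : Fin n → ℕ => ‖∏ i, z i ^ a i‖) ∧
      ∑' a : Fin n → ℕ, ∏ i, z i ^ a i = ∏ i, (1 - z i)⁻¹ := by
  intro n
  induction n with
  | zero =>
    intro z hz
    constructor
    · exact Summable.of_finite
    · rw [tsum_eq_single (0 : Fin 0 → ℕ) (fun b hb => absurd (Subsingleton.elim b 0) hb)]
      simp
  | succ n ih =>
    intro z hz
    set e := Fin.consEquiv (fun _ : Fin (n+1) => ℕ) with he
    obtain ⟨ihs, iht⟩ := ih (fun i => z i.succ) (fun i => hz i.succ)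
    have hg : Summable (fun k : ℕ => ‖z 0 ^ k‖) := by
      simpa using summable_geometric_of_lt_one (norm_nonneg (z 0)) (hz 0)
    have key : ∀ p : ℕ × (Fin n → ℕ),
        (∏ i, z i ^ (e p) i) = z 0 ^ p.1 * ∏ i : Fin n, z i.succ ^ p.2 i := by
      intro p
      rw [Fin.prod_univ_succ]
      simp [he, Fin.consEquiv]
    have hsum2 : Summable (fun p : ℕ × (Fin n → ℕ) => ‖z 0 ^ p.1 * ∏ i : Fin n, z i.succ ^ p.2 i‖) :=
      Summable.mul_norm (f := fun k : ℕ => z 0 ^ k) (g := fun b : Fin n → ℕ => ∏ i, z i.succ ^ b i) hg ihs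
    have hsc : Summable ((fun a : Fin (n+1) → ℕ => ‖∏ i, z i ^ a i‖) ∘ e) :=
      hsum2.congr fun p => (congrArg norm (key p)).symm
    constructor
    · exact e.summable_iff.mp hsc
    · calc ∑' a : Fin (n+1) → ℕ, ∏ i, z i ^ a i
          = ∑' p : ℕ × (Fin n → ℕ), ∏ i, z i ^ (e p) i := (e.tsum_eq _).symm
        _ = ∑' p : ℕ × (Fin n → ℕ), z 0 ^ p.1 * ∏ i : Fin n, z i.succ ^ p.2 i := tsum_congr key
        _ = (∑' k : ℕ, z 0 ^ k) * ∑' b : Fin n → ℕ, ∏ i : Fin n, z i.succ ^ b i :=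
            (tsum_mul_tsum_of_summable_norm (f := fun k : ℕ => z 0 ^ k) (g := fun b : Fin n → ℕ => ∏ i, z i.succ ^ b i) hg ihs).symm
        _ = ∏ i, (1 - z i)⁻¹ := by
            rw [tsum_geometric_of_norm_lt_one (hz 0), iht, Fin.prod_univ_succ]

lemma pair_card (n : ℕ) : 2 * Fintype.card {p : Fin n × Fin n // p.1 ≤ p.2} ≤ n * (n + 1) := by
  rw [Fintype.card_subtype]
  have h1 := Finset.card_filter_add_card_filter_not
    (s := (univ : Finset (Fin n × Fin n))) (p := fun p => p.1 ≤ p.2)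
  have hcard : (univ : Finset (Fin n × Fin n)).card = n * n := by
    simp [Finset.card_univ]
  have h3 : (filter (fun p : Fin n × Fin n => p.1 < p.2) univ).card
      = (filter (fun p : Fin n × Fin n => ¬ p.1 ≤ p.2) univ).card := by
    apply Finset.card_bij' (fun p _ => Prod.swap p) (fun p _ => Prod.swap p)
    · intro p hp
      simp only [mem_filter, mem_univ, true_and] at hp ⊢
      simpa [not_le] using hp
    · intro p hp
      simp only [mem_filter, mem_univ, true_and, not_le] at hp ⊢
      exact hp
    · intro p _; simp
    · intro p _; simp
  have h2 : (filter (fun p : Fin n × Fin n => p.1 ≤ p.2) univ).card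
      ≤ (filter (fun p : Fin n × Fin n => p.1 < p.2) univ).card + n := by
    have hsub : filter (fun p : Fin n × Fin n => p.1 ≤ p.2) univ
        ⊆ filter (fun p : Fin n × Fin n => p.1 < p.2) univ
          ∪ filter (fun p : Fin n × Fin n => p.1 = p.2) univ := by
      intro p hp
      simp only [mem_filter, mem_univ, true_and, mem_union] at hp ⊢
      exact hp.lt_or_eq
    refine (Finset.card_le_card hsub).trans ?_
    refine (Finset.card_union_le _ _).trans ?_
    have : (filter (fun p : Fin n × Fin n => p.1 = p.2) univ).card ≤ n := by
      have := Finset.card_le_card_of_injOn (f := fun p : Fin n × Fin n => p.1)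
        (s := filter (fun p : Fin n × Fin n => p.1 = p.2) univ) (t := univ)
        (fun p _ => mem_univ _) ?_
      · simpa using this
      · intro p hp q hq hpq
        simp only [coe_filter, Set.mem_setOf_eq, mem_univ, true_and] at hp hq
        exact Prod.ext hpq (hp ▸ hq ▸ hpq)
    omega
  have hnn : n * (n + 1) = n * n + n := by ring
  omega

noncomputable def fidx {n : ℕ} (hn : 0 < n) (a : Fin n → ℕ) : Fin n :=
  if h : (univ.filter fun i => a i ≠ 0).Nonempty then (univ.filter fun i => a i ≠ 0).min' h
  else ⟨0, hn⟩

noncomputable def dec1 {n : ℕ} (hn : 0 < n) (a : Fin n → ℕ) : Fin n → ℕ :=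
  a - Pi.single (fidx hn a) 1

lemma fidx_spec {n : ℕ} (hn : 0 < n) (a : Fin n → ℕ) (ha : a ≠ 0) :
    a (fidx hn a) ≠ 0 ∧ ∀ j, a j ≠ 0 → fidx hn a ≤ j := by
  have h : (univ.filter fun i => a i ≠ 0).Nonempty := by
    obtain ⟨i, hi⟩ := Function.ne_iff.mp ha
    refine ⟨i, by simpa using hi⟩
  rw [fidx, dif_pos h]
  constructor
  · have := Finset.min'_mem _ h
    simpa using this
  · intro j hj
    exact Finset.min'_le _ _ (by simp [hj])

lemma dec_add {n : ℕ} (hn : 0 < n) (a : Fin n → ℕ) (ha : a ≠ 0) :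
    dec1 hn a + Pi.single (fidx hn a) 1 = a := by
  have h1 : 1 ≤ a (fidx hn a) := Nat.one_le_iff_ne_zero.mpr (fidx_spec hn a ha).1
  funext j
  rcases eq_or_ne j (fidx hn a) with hj | hj
  · simp only [dec1, Pi.add_apply, Pi.sub_apply, hj, Pi.single_eq_same]
    omega
  · simp [dec1, Pi.single_apply, hj]

lemma dec1_le {n : ℕ} (hn : 0 < n) (a : Fin n → ℕ) (j : Fin n) : dec1 hn a j ≤ a j := by
  simp only [dec1, Pi.sub_apply]
  omega

lemma dec_sum {n : ℕ} (hn : 0 < n) (a : Fin n → ℕ) (ha : a ≠ 0) :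
    (∑ i : Fin n, dec1 hn a i) + 1 = ∑ i : Fin n, a i := by
  conv_rhs => rw [← dec_add hn a ha]
  have : ∀ i : Fin n, ((dec1 hn a + Pi.single (fidx hn a) 1 : Fin n → ℕ)) i
      = dec1 hn a i + (Pi.single (fidx hn a) 1 : Fin n → ℕ) i := fun i => rfl
  rw [Finset.sum_congr rfl fun i _ => this i, Finset.sum_add_distrib]
  congr 1
  simp [Finset.sum_pi_single']

lemma ne_zero_of_two_le {n : ℕ} {a : Fin n → ℕ} (h2 : 2 ≤ ∑ i : Fin n, a i) : a ≠ 0 := by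
  intro h
  rw [h] at h2
  simp at h2

lemma dec1_ne_zero {n : ℕ} (hn : 0 < n) {a : Fin n → ℕ} (h2 : 2 ≤ ∑ i : Fin n, a i) :
    dec1 hn a ≠ 0 := by
  intro h
  have hs := dec_sum hn a (ne_zero_of_two_le h2)
  rw [h] at hs
  simp only [Pi.zero_apply, Finset.sum_const_zero, zero_add] at hs
  omega

lemma fidx_le_fidx_dec1 {n : ℕ} (hn : 0 < n) {a : Fin n → ℕ} (h2 : 2 ≤ ∑ i : Fin n, a i) :
    fidx hn a ≤ fidx hn (dec1 hn a) := by
  have ha := ne_zero_of_two_le h2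
  have h1 := dec1_ne_zero hn h2
  have hj : dec1 hn a (fidx hn (dec1 hn a)) ≠ 0 := (fidx_spec hn _ h1).1
  have haj : a (fidx hn (dec1 hn a)) ≠ 0 := by
    have := dec1_le hn a (fidx hn (dec1 hn a))
    omega
  exact (fidx_spec hn a ha).2 _ haj

/-- the injection from degree-≥2 multi-indices -/
noncomputable def iota {n : ℕ} (hn : 0 < n)
    (a : {x : Fin n → ℕ | 2 ≤ ∑ i : Fin n, x i}) :
    {p : Fin n × Fin n // p.1 ≤ p.2} × (Fin n → ℕ) :=
  ⟨⟨(fidx hn a.1, fidx hn (dec1 hn a.1)), fidx_le_fidx_dec1 hn a.2⟩, dec1 hn (dec1 hn a.1)⟩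

lemma iota_recon {n : ℕ} (hn : 0 < n) (a : {x : Fin n → ℕ | 2 ≤ ∑ i : Fin n, x i}) :
    ((iota hn a).2 + Pi.single (iota hn a).1.1.2 1) + Pi.single (iota hn a).1.1.1 1 = a.1 := by
  have ha := ne_zero_of_two_le a.2
  have h1 := dec1_ne_zero hn a.2
  rw [show (iota hn a).2 = dec1 hn (dec1 hn a.1) from rfl]
  rw [show (iota hn a).1.1.2 = fidx hn (dec1 hn a.1) from rfl]
  rw [show (iota hn a).1.1.1 = fidx hn a.1 from rfl]
  rw [dec_add hn _ h1, dec_add hn _ ha]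

lemma iota_inj {n : ℕ} (hn : 0 < n) : Function.Injective (iota hn) := by
  intro a b hab
  have := iota_recon hn a
  rw [hab] at this
  rw [iota_recon hn b] at this
  exact Subtype.ext this.symm

lemma prod_pow_add {n : ℕ} (w : Fin n → ℝ) (a b : Fin n → ℕ) :
    ∏ i : Fin n, w i ^ (a + b) i = (∏ i : Fin n, w i ^ a i) * ∏ i : Fin n, w i ^ b i := by
  rw [← Finset.prod_mul_distrib]
  exact Finset.prod_congr rfl fun i _ => by rw [Pi.add_apply, pow_add]

lemma prod_pow_single {n : ℕ} (w : Fin n → ℝ) (i : Fin n) :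
    ∏ j : Fin n, w j ^ (Pi.single i 1 : Fin n → ℕ) j = w i := by
  rw [Finset.prod_eq_single i (fun j _ hj => by rw [Pi.single_eq_of_ne hj, pow_zero])
    (fun h => absurd (Finset.mem_univ i) h)]
  rw [Pi.single_eq_same, pow_one]




/-- Foster's Lemma 1.1: if `F(z₁,…,zₙ) = ∏ (1 - z i)⁻¹` is expanded as the series of
monomials `∑_{a : Fin n → ℕ} ∏ i, z i ^ a i`, if `0 < r ≤ r₀ < 1`, `m ≤ n` is a positive
integer with `|z i| ≤ r` for `i ≤ m` and `|z i| < r²` for `i > m`, and if `f` is any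
subseries (indexed by a set `S` of multi-indices) containing the terms `1 + ∑_{i≤m} z i`,
then `|F - f| ≤ [n(n+1)/(2(1-r₀)^{n+2}) + n]·r²`. -/
theorem stmt_0 (n m : ℕ) (hm : 0 < m) (hmn : m ≤ n) (r r0 : ℝ)
    (hr : 0 < r) (hrr0 : r ≤ r0) (hr0 : r0 < 1)
    (z : Fin n → ℂ)
    (hz1 : ∀ i : Fin n, (i : ℕ) < m → ‖z i‖ ≤ r)
    (hz2 : ∀ i : Fin n, m ≤ (i : ℕ) → ‖z i‖ < r ^ 2)
    (S : Set (Fin n → ℕ))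
    (h0 : (0 : Fin n → ℕ) ∈ S)
    (h1 : ∀ i : Fin n, (i : ℕ) < m → Pi.single i 1 ∈ S) :
    ‖(∏ i, (1 - z i)⁻¹) - ∑' a : S, ∏ i, z i ^ ((a : Fin n → ℕ) i)‖
      ≤ ((n * (n + 1)) / (2 * (1 - r0) ^ (n + 2)) + n) * r ^ 2 := by
  have hn : 0 < n := lt_of_lt_of_le hm hmn
  have hr1 : r < 1 := lt_of_le_of_lt hrr0 hr0
  have hr2r : r ^ 2 ≤ r := by nlinarith
  have hwr : ∀ i, ‖z i‖ ≤ r := fun i => by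
    rcases lt_or_ge (i : ℕ) m with h | h
    · exact hz1 i h
    · exact le_trans (le_of_lt (hz2 i h)) hr2r
  have hwlt : ∀ i, ‖z i‖ < 1 := fun i => lt_of_le_of_lt (hwr i) hr1
  obtain ⟨hns, hts⟩ := geom_pi n z hwlt
  have hsum : Summable (fun a : Fin n → ℕ => ∏ i, z i ^ a i) := hns.of_norm
  set P : (Fin n → ℕ) → ℝ := fun a => ∏ i : Fin n, ‖z i‖ ^ a i with hPdef
  have hPnn : ∀ a, 0 ≤ P a := fun a => Finset.prod_nonneg fun i _ => pow_nonneg (norm_nonneg _) _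
  have hnormP : ∀ a : Fin n → ℕ, ‖∏ i, z i ^ a i‖ = P a := fun a => by
    rw [norm_prod]
    exact Finset.prod_congr rfl fun i _ => norm_pow _ _
  have hPs : Summable P := hns.congr hnormP
  -- sets
  set T1 : Set (Fin n → ℕ) := {x : Fin n → ℕ | 2 ≤ ∑ i : Fin n, x i} with hT1def
  set t2 : Finset (Fin n → ℕ) :=
    (univ.filter fun i : Fin n => m ≤ (i : ℕ)).image (fun i => Pi.single i 1) with ht2def
  -- rewrite difference as sum over complement
  have hsplit := Summable.tsum_subtype_add_tsum_subtype_compl hsum S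
  have hdiff : (∏ i, (1 - z i)⁻¹) - ∑' a : S, ∏ i, z i ^ ((a : Fin n → ℕ) i)
      = ∑' a : ↥Sᶜ, ∏ i, z i ^ ((a : Fin n → ℕ) i) := by
    rw [← hts, ← hsplit]; ring
  rw [hdiff]
  -- bound by sum of norms
  have step1 : ‖∑' a : ↥Sᶜ, ∏ i, z i ^ ((a : Fin n → ℕ) i)‖ ≤ ∑' a : ↥Sᶜ, P a := by
    refine le_trans (norm_tsum_le_tsum_norm (hns.subtype _)) (le_of_eq (tsum_congr fun a => ?_))
    exact hnormP a
  -- split over T1 and t2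
  have hind : ∀ a : Fin n → ℕ,
      (Sᶜ).indicator P a ≤ T1.indicator P a + (↑t2 : Set (Fin n → ℕ)).indicator P a := by
    intro a
    by_cases hc : a ∈ Sᶜ
    · rw [Set.indicator_of_mem hc]
      rcases le_or_gt 2 (∑ i : Fin n, a i) with hdeg | hdeg
      · rw [Set.indicator_of_mem (by exact hdeg : a ∈ T1)]
        exact le_add_of_nonneg_right (Set.indicator_nonneg (fun x _ => hPnn x) _)
      · -- degree ≤ 1
        have hz0 : ∑ i : Fin n, a i ≠ 0 := by
          intro h
          have : a = 0 := by
            funext j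
            exact (Finset.sum_eq_zero_iff.mp h) j (mem_univ j)
          exact hc (this ▸ h0)
        have hone : ∑ i : Fin n, a i = 1 := by omega
        obtain ⟨i, hi⟩ : ∃ i, a i ≠ 0 := by
          by_contra h
          push_neg at h
          exact hz0 (Finset.sum_eq_zero fun j _ => h j)
        have hle : a i ≤ ∑ j : Fin n, a j :=
          Finset.single_le_sum (fun j _ => Nat.zero_le _) (mem_univ i)
        have hai : a i = 1 := by omega
        have hother : ∀ j, j ≠ i → a j = 0 := by
          intro j hj
          by_contra h
          have h2 : a j ≤ ∑ k ∈ univ.erase i, a k :=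
            Finset.single_le_sum (fun k _ => Nat.zero_le _) (by simp [hj])
          have h3 : a i + ∑ k ∈ univ.erase i, a k = ∑ k : Fin n, a k :=
            Finset.add_sum_erase _ _ (mem_univ i)
          omega
        have hsingle : a = Pi.single i 1 := by
          funext j
          rcases eq_or_ne j i with h | h
          · rw [h, Pi.single_eq_same, hai]
          · rw [Pi.single_eq_of_ne h, hother j h]
        have him : m ≤ (i : ℕ) := by
          by_contra h
          push_neg at h
          exact hc (hsingle ▸ h1 i h)
        have hmem : a ∈ (↑t2 : Set (Fin n → ℕ)) := by
          rw [ht2def]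
          simp only [coe_image, coe_filter, Set.mem_image, Set.mem_setOf_eq]
          exact ⟨i, ⟨mem_univ i, him⟩, hsingle.symm⟩
        rw [Set.indicator_of_mem hmem]
        exact le_add_of_nonneg_left (Set.indicator_nonneg (fun x _ => hPnn x) _)
    · rw [Set.indicator_of_notMem hc]
      exact add_nonneg (Set.indicator_nonneg (fun x _ => hPnn x) _)
        (Set.indicator_nonneg (fun x _ => hPnn x) _)
  have step2 : ∑' a : ↥Sᶜ, P a ≤ (∑' a : ↥T1, P a) + ∑' a : (↑t2 : Set (Fin n → ℕ)), P a := by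
    rw [_root_.tsum_subtype, _root_.tsum_subtype T1 P, _root_.tsum_subtype (↑t2 : Set (Fin n → ℕ)) P,
      ← Summable.tsum_add (hPs.indicator _) (hPs.indicator _)]
    exact Summable.tsum_le_tsum hind (hPs.indicator _) ((hPs.indicator _).add (hPs.indicator _))
  -- bound for t2
  have hT2bound : ∑' a : (↑t2 : Set (Fin n → ℕ)), P a ≤ (n : ℝ) * r ^ 2 := by
    rw [Finset.tsum_subtype' t2 P]
    have hb : ∀ a ∈ t2, P a ≤ r ^ 2 := by
      intro a ha
      rw [ht2def] at ha
      simp only [mem_image, mem_filter, mem_univ, true_and] at ha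
      obtain ⟨i, him, rfl⟩ := ha
      rw [hPdef]
      calc ∏ j : Fin n, ‖z j‖ ^ (Pi.single i 1 : Fin n → ℕ) j = ‖z i‖ :=
            prod_pow_single _ i
        _ ≤ r ^ 2 := (hz2 i him).le
    calc ∑ a ∈ t2, P a ≤ t2.card • (r ^ 2) := Finset.sum_le_card_nsmul _ _ _ hb
      _ = (t2.card : ℝ) * r ^ 2 := nsmul_eq_mul _ _
      _ ≤ (n : ℝ) * r ^ 2 := by
          have : t2.card ≤ n := by
            refine le_trans Finset.card_image_le ?_
            refine le_trans (Finset.card_filter_le _ _) ?_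
            simp
          have h2 : (t2.card : ℝ) ≤ (n : ℝ) := by exact_mod_cast this
          nlinarith [sq_nonneg r]
  -- bound for T1
  have hT1bound : ∑' a : ↥T1, P a
      ≤ (n : ℝ) * (n + 1) / 2 * ((1 - r0) ^ (n + 2))⁻¹ * r ^ 2 := by
    obtain ⟨hrs, hrt⟩ := geom_pi n (fun _ : Fin n => r) (fun i => by
      simpa [Real.norm_eq_abs, abs_of_nonneg hr.le] using hr1)
    have hR : Summable (fun b : Fin n → ℕ => ∏ i : Fin n, r ^ b i) := hrs.of_norm
    have hRt : ∑' b : Fin n → ℕ, ∏ i : Fin n, r ^ b i = ((1 - r)⁻¹) ^ n := by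
      rw [hrt]; simp
    have hGnn : ∀ q : ({p : Fin n × Fin n // p.1 ≤ p.2} × (Fin n → ℕ)),
        0 ≤ r ^ 2 * ∏ i : Fin n, r ^ q.2 i := fun q =>
      mul_nonneg (sq_nonneg r) (Finset.prod_nonneg fun i _ => pow_nonneg hr.le _)
    have hGs : Summable (fun q : ({p : Fin n × Fin n // p.1 ≤ p.2} × (Fin n → ℕ)) =>
        r ^ 2 * ∏ i : Fin n, r ^ q.2 i) :=
      Summable.mul_of_nonneg (f := fun _ : {p : Fin n × Fin n // p.1 ≤ p.2} => r ^ 2)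
        (g := fun b : Fin n → ℕ => ∏ i : Fin n, r ^ b i) Summable.of_finite hR
        (fun _ => sq_nonneg r) (fun b => Finset.prod_nonneg fun i _ => pow_nonneg hr.le _)
    have hPmul : ∀ (x : Fin n → ℕ) (j : Fin n), P (x + Pi.single j 1) = P x * ‖z j‖ := by
      intro x j
      simp only [hPdef]
      rw [prod_pow_add (fun i => ‖z i‖) x (Pi.single j 1), prod_pow_single (fun i => ‖z i‖) j]
    have hPG : ∀ a : ↥T1,
        P a.1 ≤ r ^ 2 * ∏ i : Fin n, r ^ (iota hn a).2 i := by
      intro a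
      have recon := iota_recon hn a
      have hPb : P (iota hn a).2 ≤ ∏ i : Fin n, r ^ (iota hn a).2 i := by
        rw [hPdef]
        exact Finset.prod_le_prod (fun i _ => pow_nonneg (norm_nonneg _) _)
          (fun i _ => pow_le_pow_left₀ (norm_nonneg _) (hwr i) _)
      calc P a.1 = P (iota hn a).2 * ‖z (iota hn a).1.1.2‖ * ‖z (iota hn a).1.1.1‖ := by
            rw [← recon, hPmul, hPmul]
        _ ≤ (∏ i : Fin n, r ^ (iota hn a).2 i) * r * r := by
            have hb : (0:ℝ) ≤ ∏ i : Fin n, r ^ (iota hn a).2 i :=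
              Finset.prod_nonneg fun i _ => pow_nonneg hr.le _
            apply mul_le_mul (mul_le_mul hPb (hwr _) (norm_nonneg _) hb) (hwr _)
              (norm_nonneg _)
            exact mul_nonneg hb hr.le
        _ = r ^ 2 * ∏ i : Fin n, r ^ (iota hn a).2 i := by ring
    have h0r0 : (0:ℝ) < 1 - r0 := by linarith
    have h0r : (0:ℝ) < 1 - r := by linarith
    have hi1 : (1 - r)⁻¹ ≤ (1 - r0)⁻¹ := by
      apply inv_anti₀ h0r0
      linarith
    have hi2 : ((1 - r)⁻¹) ^ n ≤ ((1 - r0)⁻¹) ^ n :=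
      pow_le_pow_left₀ (inv_nonneg.mpr h0r.le) hi1 n
    have hone : 1 ≤ (1 - r0)⁻¹ := by
      have := inv_anti₀ h0r0 (by linarith : 1 - r0 ≤ 1)
      simpa using this
    have hi3 : ((1 - r0)⁻¹) ^ n ≤ ((1 - r0)⁻¹) ^ (n + 2) :=
      pow_le_pow_right₀ hone (by omega)
    have hcard : ((Fintype.card {p : Fin n × Fin n // p.1 ≤ p.2}) : ℝ)
        ≤ (n : ℝ) * (n + 1) / 2 := by
      have hp := pair_card n
      have h2 : ((2 * Fintype.card {p : Fin n × Fin n // p.1 ≤ p.2} : ℕ) : ℝ)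
          ≤ ((n * (n + 1) : ℕ) : ℝ) := by exact_mod_cast hp
      push_cast at h2
      linarith
    calc ∑' a : ↥T1, P a
        ≤ ∑' q : ({p : Fin n × Fin n // p.1 ≤ p.2} × (Fin n → ℕ)),
            r ^ 2 * ∏ i : Fin n, r ^ q.2 i :=
          Summable.tsum_le_tsum_of_inj (iota hn) (iota_inj hn) (fun c _ => hGnn c) hPG
            (hPs.subtype _) hGs
      _ = (∑' p : {p : Fin n × Fin n // p.1 ≤ p.2}, r ^ 2)
            * ∑' b : Fin n → ℕ, ∏ i : Fin n, r ^ b i := by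
          refine (tsum_mul_tsum_of_summable_norm
            (f := fun _ : {p : Fin n × Fin n // p.1 ≤ p.2} => r ^ 2)
            (g := fun b : Fin n → ℕ => ∏ i : Fin n, r ^ b i)
            Summable.of_finite (hrs.congr fun b => rfl)).symm
      _ = ((Fintype.card {p : Fin n × Fin n // p.1 ≤ p.2}) : ℝ) * r ^ 2 * ((1 - r)⁻¹) ^ n := by
          rw [tsum_fintype, Finset.sum_const, hRt, nsmul_eq_mul]
          simp [Finset.card_univ, mul_assoc]
      _ ≤ ((n : ℝ) * (n + 1) / 2) * r ^ 2 * ((1 - r0)⁻¹) ^ (n + 2) := by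
          apply mul_le_mul (mul_le_mul_of_nonneg_right hcard (sq_nonneg r)) (hi2.trans hi3)
            (pow_nonneg (inv_nonneg.mpr h0r.le) n)
          positivity
      _ = (n : ℝ) * (n + 1) / 2 * ((1 - r0) ^ (n + 2))⁻¹ * r ^ 2 := by
          rw [inv_pow]
          ring
  calc ‖∑' a : ↥Sᶜ, ∏ i, z i ^ ((a : Fin n → ℕ) i)‖
      ≤ ∑' a : ↥Sᶜ, P a := step1
    _ ≤ (∑' a : ↥T1, P a) + ∑' a : (↑t2 : Set (Fin n → ℕ)), P a := step2
    _ ≤ (n : ℝ) * (n + 1) / 2 * ((1 - r0) ^ (n + 2))⁻¹ * r ^ 2 + (n : ℝ) * r ^ 2 :=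
        add_le_add hT1bound hT2bound
    _ = ((n * (n + 1)) / (2 * (1 - r0) ^ (n + 2)) + n) * r ^ 2 := by
        have hpow : (1 - r0) ^ (n + 2) ≠ 0 := pow_ne_zero _ (ne_of_gt (by linarith : (0:ℝ) < 1 - r0))
        field_simp
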